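/- arXiv:1906.03646 — 2 statements merged into one kernel-verified Lean document; each statement's English description precedes it below -/
import Mathlib

section
/- Let B_n and C_n denote the type B and type C root systems sharing the hyperoctahedral Weyl group 𝔅_n, with simple roots β_1,…,β_n and γ_1,…,γ_n respectively, related by the substitution γ_1 ↦ 2β_1 and γ_i ↦ β_i for i > 1. Then for all w, x ∈ 𝔅_n, applying this substitution to the type-C Billey restriction gives: substituted ξ_w^C|_x = 2^{s(w)} · ξ_w^B|_x, where s(w) is the number of negative entries of the signed permutation w. -/
open CoxeterSystem MvPolynomial

section Defs

variable {B : Type} [DecidableEq B] {W : Type} [Group W] {M : CoxeterMatrix B}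

/-- The simple reflection action on the root lattice determined by the "Cartan" integers `A`:
`s_i` sends `α_j ↦ α_j - (A i j) • α_i` (extended linearly, where `α_j = single j 1`). -/
noncomputable def cartanRefl (A : B → B → ℤ) (i : B) (x : B →₀ ℤ) : B →₀ ℤ :=
  x - (x.sum fun j c => c * A i j) • Finsupp.single i 1

/-- The action of the word `s_{a_1} s_{a_2} ⋯ s_{a_m}` on the root lattice. -/
noncomputable def wordAct (A : B → B → ℤ) (l : List B) (x : B →₀ ℤ) : B →₀ ℤ :=
  l.foldr (cartanRefl A) x

/-- The root `s_{a_1} ⋯ s_{a_{k-1}} (α_{a_k})` attached to position `k` of the word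
`l = (a_1, …, a_m)`. -/
noncomputable def rootOf (A : B → B → ℤ) (l : List B) (k : Fin l.length) : B →₀ ℤ :=
  wordAct A (l.take k) (Finsupp.single (l.get k) 1)

/-- A vector of the root lattice is positive if it is nonzero with nonnegative coordinates
in the simple roots. -/
def IsPosRoot (x : B →₀ ℤ) : Prop := x ≠ 0 ∧ ∀ j, 0 ≤ x j

/-- Interpret a root-lattice vector `Σ c_i α_i` as the linear polynomial `Σ c_i X_i` in
`ℤ[α_1, …, α_r]`. -/
noncomputable def toPoly (x : B →₀ ℤ) : MvPolynomial B ℤ := x.sum fun i c => c • X i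

/-- `l` is a reduced word for `w`. -/
def IsReducedWordFor (cs : CoxeterSystem M W) (l : List B) (w : W) : Prop :=
  cs.IsReduced l ∧ cs.wordProd l = w

/-- The subword of `l` occupying the set of positions `J`. -/
def select (l : List B) (J : Finset (Fin l.length)) : List B :=
  ((List.finRange l.length).filter (· ∈ J)).map l.get

open Classical in
/-- Billey's restriction `ξ_w|_v`, computed from a word `l` (a reduced word for `v`):
the sum over all subwords `J ⊆ {1, …, ℓ}` of `l` that are reduced words for `w` of
`∏_{k ∈ J} s_{a_1} ⋯ s_{a_{k-1}} (α_{a_k})`. -/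
noncomputable def billey (cs : CoxeterSystem M W) (A : B → B → ℤ) (w : W) (l : List B) :
    MvPolynomial B ℤ :=
  ∑ J : Finset (Fin l.length),
    if IsReducedWordFor cs (select l J) w then ∏ k ∈ J, toPoly (rootOf A l k) else 0

/-- Bruhat order on `W`, via the subword property. -/
def bruhatLE (cs : CoxeterSystem M W) (u v : W) : Prop :=
  ∃ lv, IsReducedWordFor cs lv v ∧ ∃ lu, lu.Sublist lv ∧ IsReducedWordFor cs lu u

end Defs

section TypeBC

/-- The Coxeter matrix shared by the root systems `B_n` and `C_n` (hyperoctahedral Weyl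
group): the bond between nodes 1 and 2 (indices 0 and 1) is a 4-bond, consecutive nodes
otherwise have 3-bonds. -/
def BCMatrix (n : ℕ) : CoxeterMatrix (Fin n) where
  M := Matrix.of fun i j : Fin n =>
    if i = j then 1
      else if ((i : ℕ) = 0 ∧ (j : ℕ) = 1) ∨ ((j : ℕ) = 0 ∧ (i : ℕ) = 1) then 4
      else if (j : ℕ) + 1 = i ∨ (i : ℕ) + 1 = j then 3 else 2
  isSymm := by unfold Matrix.IsSymm; aesop
  diagonal := by simp
  off_diagonal := by aesop

/-- The Cartan integers of type `B_n` (simple roots `β_1, …, β_n`, with `β_1` short):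
`s_i (β_j) = β_j - (cartanB n i j) • β_i`; in particular `s_1 (β_2) = β_2 + 2 β_1`. -/
def cartanB (n : ℕ) (i j : Fin n) : ℤ :=
  if i = j then 2
    else if (i : ℕ) = 0 ∧ (j : ℕ) = 1 then -2
    else if (j : ℕ) + 1 = i ∨ (i : ℕ) + 1 = j then -1 else 0

/-- The Cartan integers of type `C_n` (simple roots `γ_1, …, γ_n`, with `γ_1` long):
`s_i (γ_j) = γ_j - (cartanC n i j) • γ_i`; in particular `s_2 (γ_1) = γ_1 + 2 γ_2`. -/
def cartanC (n : ℕ) (i j : Fin n) : ℤ :=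
  if i = j then 2
    else if (i : ℕ) = 1 ∧ (j : ℕ) = 0 then -2
    else if (j : ℕ) + 1 = i ∨ (i : ℕ) + 1 = j then -1 else 0

/-- The substitution `γ_1 ↦ 2 β_1`, `γ_i ↦ β_i` for `i > 1`, as an algebra endomorphism of
`ℤ[X_1, …, X_n]`. -/
noncomputable def barSub (n : ℕ) : MvPolynomial (Fin n) ℤ →ₐ[ℤ] MvPolynomial (Fin n) ℤ :=
  MvPolynomial.bind₁ fun i : Fin n =>
    if (i : ℕ) = 0 then 2 * MvPolynomial.X i else MvPolynomial.X i

end TypeBC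

section Helpers

variable {n : ℕ}

/-- The scaling coefficient: 2 on the first node, 1 elsewhere. -/
def dcoef (i : Fin n) : ℤ := if (i : ℕ) = 0 then 2 else 1

lemma toPoly_eq_sum (x : Fin n →₀ ℤ) :
    toPoly x = ∑ i, (x i) • (X i : MvPolynomial (Fin n) ℤ) := by
  rw [toPoly, Finsupp.sum_fintype]; intro i; simp

lemma toPoly_smul (c : ℤ) (x : Fin n →₀ ℤ) : toPoly (c • x) = c • toPoly x := by
  simp [toPoly_eq_sum, Finset.smul_sum, smul_smul, mul_assoc]

lemma cartanRefl_apply (A : Fin n → Fin n → ℤ) (i : Fin n) (x : Fin n →₀ ℤ) (j : Fin n) :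
    cartanRefl A i x j = x j - (∑ k, x k * A i k) * (if i = j then 1 else 0) := by
  have h : (x.sum fun k c => c * A i k) = ∑ k, x k * A i k :=
    Finsupp.sum_fintype _ _ (by intro k; simp)
  simp [cartanRefl, h, Finsupp.single_apply]

lemma cartanRefl_smul (A : Fin n → Fin n → ℤ) (i : Fin n) (c : ℤ) (x : Fin n →₀ ℤ) :
    cartanRefl A i (c • x) = c • cartanRefl A i x := by
  ext j
  simp [cartanRefl_apply, ← Finset.mul_sum, mul_assoc, mul_sub, Finset.mul_sum]

lemma wordAct_smul (A : Fin n → Fin n → ℤ) (l : List (Fin n)) (c : ℤ) (x : Fin n →₀ ℤ) :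
    wordAct A l (c • x) = c • wordAct A l x := by
  induction l with
  | nil => rfl
  | cons a t ih =>
      show cartanRefl A a (wordAct A t (c • x)) = _
      rw [ih, cartanRefl_smul]; rfl

lemma cartan_scale (i j : Fin n) :
    cartanB n i j * dcoef j = dcoef i * cartanC n i j := by
  rcases i with ⟨i, hi⟩; rcases j with ⟨j, hj⟩
  simp only [cartanB, cartanC, dcoef, Fin.mk.injEq]
  split_ifs <;> omega

/-- The coordinatewise doubling-at-node-0 map. -/
noncomputable def Dmap (hn : 0 < n) (x : Fin n →₀ ℤ) : Fin n →₀ ℤ :=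
  x + Finsupp.single ⟨0, hn⟩ (x ⟨0, hn⟩)

lemma Dmap_apply (hn : 0 < n) (x : Fin n →₀ ℤ) (j : Fin n) :
    Dmap hn x j = dcoef j * x j := by
  rcases j with ⟨j, hj⟩
  simp only [Dmap, Finsupp.add_apply, Finsupp.single_apply, dcoef, Fin.mk.injEq]
  split_ifs with h1 h2 h2
  · subst h2; ring
  · omega
  · omega
  · ring

lemma Dmap_single (hn : 0 < n) (i : Fin n) :
    Dmap hn (Finsupp.single i 1) = dcoef i • Finsupp.single i 1 := by
  ext j
  simp only [Dmap_apply, Finsupp.smul_apply, Finsupp.single_apply, smul_eq_mul]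
  split_ifs with h
  · subst h; ring
  · ring

lemma cartanRefl_Dmap (hn : 0 < n) (i : Fin n) (x : Fin n →₀ ℤ) :
    cartanRefl (cartanB n) i (Dmap hn x) = Dmap hn (cartanRefl (cartanC n) i x) := by
  ext j
  rw [cartanRefl_apply, Dmap_apply, Dmap_apply, cartanRefl_apply]
  have hsum : (∑ k, Dmap hn x k * cartanB n i k) = dcoef i * ∑ k, x k * cartanC n i k := by
    rw [Finset.mul_sum]
    refine Finset.sum_congr rfl fun k _ => ?_
    rw [Dmap_apply]
    linear_combination x k * cartan_scale i k
  rw [hsum]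
  split_ifs with h
  · subst h; ring
  · ring

lemma wordAct_Dmap (hn : 0 < n) (l : List (Fin n)) (x : Fin n →₀ ℤ) :
    wordAct (cartanB n) l (Dmap hn x) = Dmap hn (wordAct (cartanC n) l x) := by
  induction l with
  | nil => rfl
  | cons a t ih =>
      show cartanRefl (cartanB n) a (wordAct (cartanB n) t (Dmap hn x)) = _
      rw [ih, cartanRefl_Dmap]; rfl

lemma Dmap_rootOf (hn : 0 < n) (l : List (Fin n)) (k : Fin l.length) :
    Dmap hn (rootOf (cartanC n) l k) = dcoef (l.get k) • rootOf (cartanB n) l k := by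
  rw [rootOf, rootOf, ← wordAct_Dmap, Dmap_single, wordAct_smul]

lemma barSub_toPoly (hn : 0 < n) (x : Fin n →₀ ℤ) :
    barSub n (toPoly x) = toPoly (Dmap hn x) := by
  rw [toPoly_eq_sum, toPoly_eq_sum, map_sum]
  refine Finset.sum_congr rfl fun i _ => ?_
  rw [map_smul, barSub, bind₁_X_right, Dmap_apply, dcoef]
  split_ifs with h
  · simp only [smul_eq_C_mul, map_mul, map_ofNat]
    ring
  · rw [one_mul]

end Helpers
section Count
variable {n : ℕ}
lemma count_select (l : List (Fin n)) (J : Finset (Fin l.length)) (z : Fin n) :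
    (select l J).count z = (J.filter fun k => l.get k = z).card := by
  classical
  have hJ : (J.filter fun k => l.get k = z)
      = Finset.filter (fun k => k ∈ J ∧ l.get k = z) Finset.univ := by
    ext k; simp [and_comm]
  rw [hJ, Finset.card_def, Finset.filter_val]
  have huniv : (Finset.univ : Finset (Fin l.length)).val = ↑(List.finRange l.length) := by
    rw [Fin.univ_def]
  rw [huniv, Multiset.filter_coe, Multiset.coe_card,
    select, List.count_eq_countP, List.countP_map, List.countP_filter,
    List.countP_eq_length_filter]
  congr 1
  apply List.filter_congr
  intro k _
  by_cases hk : k ∈ J <;> by_cases hz : l.get k = z <;> simp [Function.comp, hk, hz, Bool.beq_eq_decide_eq]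
end Count

/-- Let `𝔅_n` be the hyperoctahedral Weyl group (a group `W` with Coxeter system for
`BCMatrix n`), shared by the type-`B` and type-`C` root systems, and let `s w` be the number
of negative entries of the signed permutation `w`, characterized by the fact that every
reduced word for `w` contains the generator `s_1` exactly `s w` times.  Then applying the
substitution `γ_1 ↦ 2 β_1`, `γ_i ↦ β_i (i > 1)` to the type-`C` Billey restriction gives
`2^(s w)` times the type-`B` Billey restriction: `overline{ξ_w^C|_x} = 2^(s w) · ξ_w^B|_x`. -/
theorem barSub_billeyC_eq_two_pow_mul_billeyB
    {n : ℕ} (hn : 0 < n) {W : Type} [Group W] (cs : CoxeterSystem (BCMatrix n) W)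
    (s : W → ℕ)
    (hs : ∀ (w : W) (l : List (Fin n)), IsReducedWordFor cs l w →
      l.count (⟨0, hn⟩ : Fin n) = s w)
    (w x : W) (l : List (Fin n)) (hl : IsReducedWordFor cs l x) :
    barSub n (billey cs (cartanC n) w l) = 2 ^ s w * billey cs (cartanB n) w l := by
  classical
  unfold billey
  rw [map_sum, Finset.mul_sum]
  refine Finset.sum_congr rfl fun J _ => ?_
  by_cases hJ : IsReducedWordFor cs (select l J) w
  · rw [if_pos hJ, if_pos hJ, map_prod]
    have hroot : ∀ k : Fin l.length, barSub n (toPoly (rootOf (cartanC n) l k))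
        = MvPolynomial.C (dcoef (l.get k)) * toPoly (rootOf (cartanB n) l k) := by
      intro k
      rw [barSub_toPoly hn, Dmap_rootOf hn, toPoly_smul, smul_eq_C_mul]
    rw [Finset.prod_congr rfl fun k _ => hroot k, Finset.prod_mul_distrib,
      ← map_prod (MvPolynomial.C : ℤ →+* MvPolynomial (Fin n) ℤ) (fun k => dcoef (l.get k)) J]
    have hprod : (∏ k ∈ J, dcoef (l.get k)) = 2 ^ s w := by
      rw [← hs w (select l J) hJ, count_select]
      unfold dcoef
      rw [Finset.prod_ite, Finset.prod_const, Finset.prod_const, one_pow, mul_one]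
      have hfe : Finset.filter (fun k => ((l.get k : Fin n) : ℕ) = 0) J
          = Finset.filter (fun k => l.get k = (⟨0, hn⟩ : Fin n)) J := by
        apply Finset.filter_congr
        intro k _
        simp [Fin.ext_iff]
      rw [hfe]
    rw [hprod, map_pow]
    norm_num
  · rw [if_neg hJ, if_neg hJ, map_zero, mul_zero]
end

section
/- If v' covers v in Bruhat order and s_{i_1}⋯s_{i_m} is a reduced word for v', then there is a unique index k with 1 ≤ k ≤ m such that s_{i_1}⋯ŝ_{i_k}⋯s_{i_m} (omitting s_{i_k}) is a reduced word for v, and moreover ξ_{v'}|_{v'} = (s_{i_1}⋯s_{i_{k-1}}(α_{i_k})) · ξ_v|_{v'}, where s_{i_1}⋯s_{i_{k-1}}(α_{i_k}) is a positive root. -/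
open CoxeterSystem MvPolynomial

open CoxeterSystem

namespace SEAux

variable {B : Type} [DecidableEq B] {W : Type} [Group W] {M : CoxeterMatrix B}
  (cs : CoxeterSystem M W)

set_option linter.unusedSectionVars false

open Classical in
/-- The sign permutation attached to a simple reflection. -/
noncomputable def sgn (i : B) : Equiv.Perm (W × ℤˣ) :=
  Function.Involutive.toPerm
    (fun p => (cs.simple i * p.1 * cs.simple i, if p.1 = cs.simple i then -p.2 else p.2))
    (by
      rintro ⟨t, ε⟩
      have key : cs.simple i * t * cs.simple i = cs.simple i ↔ t = cs.simple i := by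
        constructor
        · intro h
          have := congrArg (fun x => cs.simple i * x * cs.simple i) h
          simpa [mul_assoc, cs.simple_mul_simple_cancel_left,
            cs.simple_mul_simple_cancel_right, cs.simple_mul_simple_self] using this
        · intro h
          rw [h]
          simp [mul_assoc, cs.simple_mul_simple_cancel_left]
      by_cases h : t = cs.simple i
      · simp only [key, h, if_pos]
        simp [mul_assoc, cs.simple_mul_simple_cancel_left, cs.simple_mul_simple_self]
      · simp only [key, h, if_neg, not_false_iff]
        simp [mul_assoc, cs.simple_mul_simple_cancel_left,
          cs.simple_mul_simple_cancel_right, h])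

open Classical in
theorem sgn_apply (i : B) (p : W × ℤˣ) :
    sgn cs i p = (cs.simple i * p.1 * cs.simple i,
      if p.1 = cs.simple i then -p.2 else p.2) := by
  rfl

theorem prod_sgn_apply [DecidableEq W] (ω : List B) (t : W) (ε : ℤˣ) :
    (ω.map (sgn cs)).prod (t, ε) =
      (cs.wordProd ω * t * (cs.wordProd ω)⁻¹,
        (-1 : ℤˣ) ^ ((cs.rightInvSeq ω).count t) * ε) := by
  induction ω generalizing t ε with
  | nil => simp [wordProd_nil, rightInvSeq]
  | cons i ω ih =>
    rw [List.map_cons, List.prod_cons, Equiv.Perm.mul_apply, ih, sgn_apply]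
    have hris : cs.rightInvSeq (i :: ω) =
        ((cs.wordProd ω)⁻¹ * cs.simple i * cs.wordProd ω) :: cs.rightInvSeq ω := rfl
    rw [hris, List.count_cons]
    have hcond : (cs.wordProd ω * t * (cs.wordProd ω)⁻¹ = cs.simple i) ↔
        ((cs.wordProd ω)⁻¹ * cs.simple i * cs.wordProd ω = t) := by
      constructor
      · intro h; rw [← h]; group
      · intro h; rw [← h]; group
    have hfst : cs.simple i * (cs.wordProd ω * t * (cs.wordProd ω)⁻¹) * cs.simple i =
        cs.wordProd (i :: ω) * t * (cs.wordProd (i :: ω))⁻¹ := by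
      rw [wordProd_cons]
      rw [mul_inv_rev, cs.inv_simple]
      group
    by_cases h : (cs.wordProd ω)⁻¹ * cs.simple i * cs.wordProd ω = t
    · rw [if_pos (hcond.mpr h), if_pos (by simpa using h)]
      rw [hfst, pow_succ, Prod.mk.injEq]
      refine ⟨rfl, ?_⟩
      simp [mul_neg, neg_mul]
    · rw [if_neg (fun hc => h (hcond.mp hc)), if_neg (by simpa using h)]
      rw [hfst]
      simp

theorem rightInvSeq_append' (ω₁ ω₂ : List B) :
    cs.rightInvSeq (ω₁ ++ ω₂) =
      (cs.rightInvSeq ω₁).map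
          (fun x => (cs.wordProd ω₂)⁻¹ * x * cs.wordProd ω₂)
        ++ cs.rightInvSeq ω₂ := by
  induction ω₁ with
  | nil => simp [rightInvSeq]
  | cons i ω ih =>
    have h1 : cs.rightInvSeq ((i :: ω) ++ ω₂) =
        ((cs.wordProd (ω ++ ω₂))⁻¹ * cs.simple i * cs.wordProd (ω ++ ω₂))
          :: cs.rightInvSeq (ω ++ ω₂) := rfl
    have h2 : cs.rightInvSeq (i :: ω) =
        ((cs.wordProd ω)⁻¹ * cs.simple i * cs.wordProd ω) :: cs.rightInvSeq ω := rfl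
    rw [h1, h2, ih, List.map_cons, List.cons_append]
    congr 1
    rw [wordProd_append, mul_inv_rev]
    group


theorem alt_drop (i i' : B) : ∀ (n j : ℕ),
    (alternatingWord i i' n).drop j = alternatingWord i i' (n - j) := by
  intro n
  induction n with
  | zero => intro j; simp [alternatingWord]
  | succ n ih =>
    intro j
    cases j with
    | zero => simp
    | succ j =>
      rw [alternatingWord_succ' i i' n, List.drop_succ_cons, ih j]
      congr 1
      omega

theorem mul_pow_mul_aux (a b : W) : ∀ n : ℕ, a * (b * a) ^ n = (a * b) ^ n * a := by
  intro n
  induction n with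
  | zero => simp
  | succ n ih =>
    rw [pow_succ', pow_succ]
    calc a * (b * a * (b * a) ^ n) = (a * b) * (a * (b * a) ^ n) := by
          simp [mul_assoc]
      _ = (a * b) * ((a * b) ^ n * a) := by rw [ih]
      _ = (a * b) ^ n * (a * b) * a := by rw [← mul_assoc, ← pow_succ', pow_succ]

theorem alt_d (n : ℕ) : ∀ (i i' : B),
    (cs.wordProd (alternatingWord i i' n))⁻¹ * cs.wordProd (alternatingWord i' i n)
      = (cs.simple i' * cs.simple i) ^ n := by
  induction n with
  | zero => intro i i'; simp [alternatingWord, wordProd_nil]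
  | succ n ih =>
    intro i i'
    rw [alternatingWord_succ i i' n, alternatingWord_succ i' i n,
      List.concat_eq_append, List.concat_eq_append, wordProd_append, wordProd_append]
    simp only [wordProd_singleton, mul_inv_rev, cs.inv_simple]
    have h1 : cs.simple i' * ((cs.wordProd (alternatingWord i' i n))⁻¹ *
        cs.wordProd (alternatingWord i i' n)) * cs.simple i =
        cs.simple i' * (cs.simple i * cs.simple i') ^ n * cs.simple i := by
      rw [ih i' i]
    calc cs.simple i' * (cs.wordProd (alternatingWord i' i n))⁻¹ *
          (cs.wordProd (alternatingWord i i' n) * cs.simple i)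
        = cs.simple i' * ((cs.wordProd (alternatingWord i' i n))⁻¹ *
            cs.wordProd (alternatingWord i i' n)) * cs.simple i := by group
      _ = cs.simple i' * (cs.simple i * cs.simple i') ^ n * cs.simple i := h1
      _ = (cs.simple i' * cs.simple i) ^ n * cs.simple i' * cs.simple i := by
            rw [mul_pow_mul_aux]
      _ = (cs.simple i' * cs.simple i) ^ (n + 1) := by rw [pow_succ]; group

theorem alt_e (i i' : B) (n : ℕ) :
    (cs.wordProd (alternatingWord i i' (n + M i i')))⁻¹ *
        cs.wordProd (alternatingWord i i' (n + M i i' + 1)) =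
      (cs.wordProd (alternatingWord i i' n))⁻¹ *
        cs.wordProd (alternatingWord i i' (n + 1)) := by
  have key : ∀ m : ℕ,
      (cs.wordProd (alternatingWord i i' m))⁻¹ *
        cs.wordProd (alternatingWord i i' (m + 1)) =
      (cs.simple i' * cs.simple i) ^ m * cs.simple i' := by
    intro m
    rw [alternatingWord_succ i i' m, List.concat_eq_append, wordProd_append,
      wordProd_singleton, ← mul_assoc, alt_d cs m]
  rw [key, key, pow_add, cs.simple_mul_simple_pow' i i']
  simp


theorem ris_getD_eq (ω : List B) (k : ℕ) (h : k < ω.length) :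
    (cs.rightInvSeq ω).getD k 1 =
      (cs.wordProd (ω.drop (k + 1)))⁻¹ * cs.wordProd (ω.drop k) := by
  rw [cs.getD_rightInvSeq, List.drop_eq_getElem_cons h, wordProd_cons]
  rw [List.getElem?_eq_getElem h]
  simp [mul_assoc]

theorem count_even [DecidableEq W] (i i' : B) (t : W) :
    Even ((cs.rightInvSeq (alternatingWord i i' (2 * M i i'))).count t) := by
  set m := M i i' with hm
  set ω := alternatingWord i i' (2 * m) with hω
  have hlω : ω.length = 2 * m := by simp [hω]
  have hsplit : cs.rightInvSeq ω =
      (cs.rightInvSeq ω).take m ++ (cs.rightInvSeq ω).drop m :=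
    (List.take_append_drop m _).symm
  have hdrop : (cs.rightInvSeq ω).drop m = cs.rightInvSeq (alternatingWord i i' m) := by
    rw [← cs.rightInvSeq_drop, hω, alt_drop]
    have h6 : 2 * m - m = m := by omega
    rw [h6]
  have htake : (cs.rightInvSeq ω).take m = cs.rightInvSeq (alternatingWord i i' m) := by
    apply List.ext_getElem
    · simp [hlω]; omega
    · intro k h1 h2
      have hk : k < m := by simp [hlω] at h1; omega
      have hk2 : k < ω.length := by omega
      have e1 : ((cs.rightInvSeq ω).take m)[k] = (cs.rightInvSeq ω).getD k 1 := by
        rw [List.getElem_take]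
        rw [List.getD_eq_getElem]
      have e2 : (cs.rightInvSeq (alternatingWord i i' m))[k] =
          (cs.rightInvSeq (alternatingWord i i' m)).getD k 1 := by
        rw [List.getD_eq_getElem]
      rw [e1, e2, ris_getD_eq cs ω k hk2,
        ris_getD_eq cs _ k (by simpa using hk)]
      rw [hω, alt_drop, alt_drop, alt_drop, alt_drop]
      have h3 : 2 * m - (k + 1) = (m - (k + 1)) + m := by omega
      have h4 : 2 * m - k = ((m - (k + 1)) + m) + 1 := by omega
      have h5 : m - k = (m - (k + 1)) + 1 := by omega
      rw [h3, h4, h5]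
      exact alt_e cs i i' (m - (k + 1))
  rw [hsplit, List.count_append, htake, hdrop]
  exact ⟨_, rfl⟩

theorem sgn_liftable [DecidableEq W] : CoxeterMatrix.IsLiftable M (sgn cs) := by
  intro i i'
  have key : ∀ m : ℕ, (sgn cs i * sgn cs i') ^ m =
      ((alternatingWord i i' (2 * m)).map (sgn cs)).prod := by
    intro m
    induction m with
    | zero => simp [alternatingWord]
    | succ m ih =>
      have h1 : alternatingWord i i' (2 * (m + 1)) =
          i :: i' :: alternatingWord i i' (2 * m) := by
        have e1 : 2 * (m + 1) = (2 * m + 1) + 1 := by ring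
        rw [e1, alternatingWord_succ' i i' (2 * m + 1), alternatingWord_succ' i i' (2 * m)]
        simp [Nat.even_add_one, parity_simps]
      rw [h1, List.map_cons, List.map_cons, List.prod_cons, List.prod_cons, ← ih,
        pow_succ', mul_assoc]
  rw [key]
  have hπ : cs.wordProd (alternatingWord i i' (2 * M i i')) = 1 := by
    rw [prod_alternatingWord_eq_mul_pow]
    have h7 : Even (2 * M i i') := even_two_mul _
    rw [if_pos h7]
    have h8 : 2 * M i i' / 2 = M i i' := by omega
    rw [h8, one_mul, cs.simple_mul_simple_pow]
  refine Equiv.ext ?_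
  rintro ⟨t, ε⟩
  rw [prod_sgn_apply, hπ]
  rw [Even.neg_one_pow (count_even cs i i' t)]
  simp

noncomputable def sgnHom [DecidableEq W] : W →* Equiv.Perm (W × ℤˣ) :=
  cs.lift ⟨sgn cs, sgn_liftable cs⟩

theorem sgnHom_wordProd [DecidableEq W] (ω : List B) :
    sgnHom cs (cs.wordProd ω) = (ω.map (sgn cs)).prod := by
  induction ω with
  | nil => simp [wordProd_nil]
  | cons i ω ih =>
    rw [wordProd_cons, map_mul, ih, List.map_cons, List.prod_cons]
    congr 1
    exact cs.lift_apply_simple (sgn_liftable cs) i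

theorem count_parity [DecidableEq W] (ω₁ ω₂ : List B)
    (h : cs.wordProd ω₁ = cs.wordProd ω₂) (t : W) :
    (-1 : ℤˣ) ^ ((cs.rightInvSeq ω₁).count t) =
      (-1 : ℤˣ) ^ ((cs.rightInvSeq ω₂).count t) := by
  have h2 : (ω₁.map (sgn cs)).prod (t, 1) = (ω₂.map (sgn cs)).prod (t, 1) := by
    rw [← sgnHom_wordProd, ← sgnHom_wordProd, h]
  rw [prod_sgn_apply, prod_sgn_apply] at h2
  have := congrArg Prod.snd h2
  simpa using this

theorem exists_odd_word [DecidableEq W] (υ : List B) (j : B) :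
    ∃ τ : List B, cs.wordProd τ = cs.wordProd υ * cs.simple j * (cs.wordProd υ)⁻¹ ∧
      Odd ((cs.rightInvSeq τ).count
        (cs.wordProd υ * cs.simple j * (cs.wordProd υ)⁻¹)) := by
  induction υ with
  | nil =>
    refine ⟨[j], by simp [wordProd_singleton, wordProd_nil], ?_⟩
    simp only [wordProd_nil, one_mul, inv_one, mul_one]
    rw [cs.rightInvSeq_singleton]
    simp [List.count_singleton]
  | cons a υ ih =>
    obtain ⟨τ', h1, h2⟩ := ih
    set t' := cs.wordProd υ * cs.simple j * (cs.wordProd υ)⁻¹ with ht'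
    set t := cs.wordProd (a :: υ) * cs.simple j * (cs.wordProd (a :: υ))⁻¹ with ht
    have htt : t = cs.simple a * t' * cs.simple a := by
      rw [ht, ht', wordProd_cons, mul_inv_rev, cs.inv_simple]
      group
    refine ⟨a :: (τ'.concat a), ?_, ?_⟩
    · rw [wordProd_cons, List.concat_eq_append, wordProd_append, wordProd_singleton, h1,
        htt]
      group
    · have hris : cs.rightInvSeq (a :: τ'.concat a) =
          ((cs.wordProd (τ'.concat a))⁻¹ * cs.simple a * cs.wordProd (τ'.concat a))
            :: cs.rightInvSeq (τ'.concat a) := rfl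
      rw [hris, cs.rightInvSeq_concat, List.count_cons, List.concat_eq_append,
        List.count_append]
      have hπτ : cs.wordProd (τ'.concat a) = t' * cs.simple a := by
        rw [List.concat_eq_append, wordProd_append, wordProd_singleton, h1]
      have hmap : (List.map (⇑(MulAut.conj (cs.simple a))) (cs.rightInvSeq τ')).count t
          = (cs.rightInvSeq τ').count t' := by
        have : t = (MulAut.conj (cs.simple a)) t' := by
          simp [MulAut.conj_apply, htt, cs.inv_simple]
        rw [this]
        exact List.count_map_of_injective _ _ (MulEquiv.injective _) _
      have hinv : t'⁻¹ = t' := by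
        rw [ht']
        simp [mul_inv_rev, cs.inv_simple, mul_assoc]
      have ht2 : t' * t' = 1 := by
        nth_rw 2 [← hinv]
        exact mul_inv_cancel t'
      have hcond1 : ((cs.wordProd (τ'.concat a))⁻¹ * cs.simple a *
          cs.wordProd (τ'.concat a) = t) ↔ t' = cs.simple a := by
        rw [hπτ, htt]
        have hX : (t' * cs.simple a)⁻¹ * cs.simple a * (t' * cs.simple a)
            = cs.simple a * (t' * (cs.simple a * (t' * cs.simple a))) := by
          rw [mul_inv_rev, cs.inv_simple, hinv]
          group
        have hY : cs.simple a * t' * cs.simple a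
            = cs.simple a * (t' * (cs.simple a * (1 : W))) := by group
        rw [hX, hY]
        constructor
        · intro h
          have h3 := mul_left_cancel (mul_left_cancel h)
          have h4 := mul_left_cancel h3
          have h5 : t' * cs.simple a = 1 := by simpa using h4
          rw [mul_eq_one_iff_eq_inv.mp h5, cs.inv_simple]
        · intro h
          rw [h]
          simp [cs.simple_mul_simple_self, cs.simple_mul_simple_cancel_left, mul_assoc]
      have hcond2 : (cs.simple a = t) ↔ t' = cs.simple a := by
        rw [htt]
        constructor
        · intro h
          have h3 := congrArg (fun x => cs.simple a * x * cs.simple a) h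
          simp only [mul_assoc, cs.simple_mul_simple_cancel_left] at h3
          rw [← mul_assoc] at h3
          simpa [cs.simple_mul_simple_cancel_right, cs.simple_mul_simple_self, mul_assoc]
            using h3.symm
        · intro h
          rw [h]
          simp [mul_assoc, cs.simple_mul_simple_cancel_left, cs.simple_mul_simple_self]
      rw [hmap, List.count_singleton]
      simp only [beq_iff_eq]
      obtain ⟨c, hc⟩ := h2
      by_cases h : t' = cs.simple a
      · rw [if_pos (hcond1.mpr h), if_pos (hcond2.mpr h)]
        exact ⟨c + 1, by omega⟩
      · rw [if_neg (fun hx => h (hcond1.mp hx)),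
          if_neg (fun hx => h (hcond2.mp hx))]
        exact ⟨c, by omega⟩

theorem strong_exchange [DecidableEq W] (ω : List B) (t : W) (ht : cs.IsReflection t)
    (hl : cs.length (cs.wordProd ω * t) < cs.length (cs.wordProd ω)) :
    t ∈ cs.rightInvSeq ω := by
  obtain ⟨u, j, htu⟩ := ht
  obtain ⟨υ, _, huυ⟩ := cs.exists_reduced_word' u
  obtain ⟨τ, hτ1, hτ2⟩ := exists_odd_word cs υ j
  rw [← huυ, ← htu] at hτ1 hτ2
  obtain ⟨ξ, hξred, hξ⟩ := cs.exists_reduced_word' (cs.wordProd ω * t)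
  have hmulself : t * t = 1 := by
    rw [htu]
    simp [mul_assoc, cs.simple_mul_simple_cancel_left]
  have hprod : cs.wordProd (ξ ++ τ) = cs.wordProd ω := by
    rw [wordProd_append, ← hξ, hτ1, mul_assoc, hmulself, mul_one]
  have heven : Even ((cs.rightInvSeq ξ).count t) := by
    by_contra hodd
    have hne : (cs.rightInvSeq ξ).count t ≠ 0 := by
      intro h0
      exact hodd (by rw [h0]; exact Even.zero)
    have hmem : t ∈ cs.rightInvSeq ξ := by
      by_contra hmem
      exact hne (List.count_eq_zero.mpr hmem)
    have := cs.isRightInversion_of_mem_rightInvSeq hξred hmem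
    rw [← hξ] at this
    have h9 := this.2
    rw [mul_assoc, hmulself, mul_one] at h9
    omega
  have hcount' : Odd ((cs.rightInvSeq (ξ ++ τ)).count t) := by
    rw [rightInvSeq_append', List.count_append]
    have hmap : ((cs.rightInvSeq ξ).map
        (fun x => (cs.wordProd τ)⁻¹ * x * cs.wordProd τ)).count t
        = (cs.rightInvSeq ξ).count t := by
      have hinj : Function.Injective
          (fun x : W => (cs.wordProd τ)⁻¹ * x * cs.wordProd τ) := by
        intro x y hxy
        simp only at hxy
        have := congrArg (fun z => cs.wordProd τ * z * (cs.wordProd τ)⁻¹) hxy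
        simpa [mul_assoc] using this
      have htfix : t = (cs.wordProd τ)⁻¹ * t * cs.wordProd τ := by
        have hinvt : t⁻¹ = t := by
          rw [htu]
          simp [mul_inv_rev, cs.inv_simple, mul_assoc]
        rw [hτ1, hinvt, hmulself, one_mul]
      nth_rw 1 [htfix]
      exact List.count_map_of_injective _ _ hinj _
    rw [hmap]
    obtain ⟨c, hc⟩ := heven
    obtain ⟨d, hd⟩ := hτ2
    exact ⟨c + d, by omega⟩
  have hpar := count_parity cs ω (ξ ++ τ) hprod.symm t
  have hodd : Odd ((cs.rightInvSeq ω).count t) := by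
    by_contra hev
    rw [Nat.not_odd_iff_even] at hev
    rw [Even.neg_one_pow hev, Odd.neg_one_pow hcount'] at hpar
    exact (by decide : (1 : ℤˣ) ≠ -1) hpar
  have hne : (cs.rightInvSeq ω).count t ≠ 0 := by
    intro h0
    rw [h0] at hodd
    simpa using hodd
  by_contra hmem
  exact hne (List.count_eq_zero.mpr hmem)

end SEAux

section BilleyAux

variable {B : Type} [DecidableEq B] {W : Type} [Group W] {M : CoxeterMatrix B}

theorem sublist_eraseIdx' {α : Type*} {l₁ l₂ : List α} (h : l₁.Sublist l₂)
    (hlen : l₁.length + 1 = l₂.length) :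
    ∃ j, j < l₂.length ∧ l₁ = l₂.eraseIdx j := by
  induction h with
  | slnil => simp at hlen
  | @cons l₁ l₂ a h ih =>
    have hL : l₁ = l₂ := h.eq_of_length (by simp at hlen; omega)
    exact ⟨0, by simp, by simp [hL]⟩
  | @cons_cons l₁ l₂ a h ih =>
    obtain ⟨j, hj, hE⟩ := ih (by simp at hlen; omega)
    exact ⟨j + 1, by simp; omega, by simp [hE]⟩

theorem select_univ (l : List B) : select l Finset.univ = l := by
  unfold select
  rw [List.filter_eq_self.mpr (by intro x hx; simp)]
  exact List.map_get_finRange l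

theorem length_select (l : List B) (J : Finset (Fin l.length)) :
    (select l J).length = J.card := by
  unfold select
  rw [List.length_map]
  have h1 : ((List.finRange l.length).filter (· ∈ J)).toFinset = J := by
    ext x
    simp
  rw [← List.toFinset_card_of_nodup ((List.nodup_finRange _).filter _), h1]

theorem map_eraseIdx' {α β : Type*} (f : α → β) (l : List α) (n : ℕ) :
    (l.eraseIdx n).map f = (l.map f).eraseIdx n := by
  rw [List.eraseIdx_eq_take_drop_succ, List.eraseIdx_eq_take_drop_succ,
    List.map_append, List.map_take, List.map_drop]

theorem select_erase (l : List B) (k : Fin l.length) :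
    select l (Finset.univ.erase k) = l.eraseIdx (k : ℕ) := by
  unfold select
  have h1 : (List.finRange l.length).filter (· ∈ Finset.univ.erase k) =
      (List.finRange l.length).filter (fun x => x != k) := by
    apply List.filter_congr
    intro x hx
    simp only [Finset.mem_erase, Finset.mem_univ, and_true, bne, decide_not,
      Bool.not_not, decide_eq_decide]
    tauto
  have h2 : (List.finRange l.length).filter (fun x => x != k) =
      (List.finRange l.length).erase k :=
    ((List.nodup_finRange _).erase_eq_filter k).symm
  rw [h1, h2, List.erase_eq_eraseIdx_of_idxOf (List.idxOf_finRange k),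
    map_eraseIdx', List.map_get_finRange]

end BilleyAux

/-- If `v'` covers `v` in Bruhat order and `l' = (i_1, …, i_m)` is a reduced word for `v'`,
then there is a unique index `k` such that deleting the `k`-th letter of `l'` yields a
reduced word for `v`; moreover for any such `k`,
`ξ_{v'}|_{v'} = (s_{i_1} ⋯ s_{i_{k-1}} (α_{i_k})) · ξ_v|_{v'}`, where
`s_{i_1} ⋯ s_{i_{k-1}} (α_{i_k})` is a positive root. -/
theorem cover_unique_deletion_and_billey_factor
    {B : Type} [DecidableEq B] {W : Type} [Group W] {M : CoxeterMatrix B}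
    (cs : CoxeterSystem M W) (A : B → B → ℤ)
    (hroots : ∀ l : List B, cs.IsReduced l → ∀ k : Fin l.length, IsPosRoot (rootOf A l k))
    (v v' : W) (hcov : bruhatLE cs v v' ∧ cs.length v' = cs.length v + 1)
    (l' : List B) (hl' : IsReducedWordFor cs l' v') :
    (∃! k : Fin l'.length, IsReducedWordFor cs (l'.eraseIdx k) v) ∧
      ∀ k : Fin l'.length, IsReducedWordFor cs (l'.eraseIdx k) v →
        billey cs A v' l' = toPoly (rootOf A l' k) * billey cs A v l' ∧
          IsPosRoot (rootOf A l' k) := by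
  classical
  obtain ⟨⟨lv, hlv, lu, hsub, hlu⟩, hlen⟩ := hcov
  have hmlen : cs.length v' = l'.length := by rw [← hl'.2]; exact hl'.1
  have hlv1 : lv.length = cs.length v' := by rw [← hlv.2]; exact (hlv.1).symm
  have hlu1 : lu.length = cs.length v := by rw [← hlu.2]; exact (hlu.1).symm
  have hlen2 : lu.length + 1 = lv.length := by omega
  obtain ⟨j, hj, hjE⟩ := sublist_eraseIdx' hsub hlen2
  set t : W := (cs.rightInvSeq lv).getD j 1 with htdef
  have htv : v' * t = v := by
    rw [← hlv.2, ← hlu.2, hjE]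
    exact cs.wordProd_mul_getD_rightInvSeq lv j
  have htmem : t ∈ cs.rightInvSeq lv := by
    rw [htdef, List.getD_eq_getElem _ _ (by simpa using hj)]
    exact List.getElem_mem _
  have htrefl := cs.isReflection_of_mem_rightInvSeq lv htmem
  have hltv : cs.length (cs.wordProd l' * t) < cs.length (cs.wordProd l') := by
    rw [hl'.2, htv]
    omega
  have hmem := SEAux.strong_exchange cs l' t htrefl hltv
  obtain ⟨n, hn, hnE⟩ := List.getElem_of_mem hmem
  have hn' : n < l'.length := by simpa using hn
  have hprodn : cs.wordProd (l'.eraseIdx n) = v := by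
    rw [← cs.wordProd_mul_getD_rightInvSeq l' n, hl'.2,
      List.getD_eq_getElem _ _ hn, hnE, htv]
  have hredn : cs.IsReduced (l'.eraseIdx n) := by
    show cs.length (cs.wordProd (l'.eraseIdx n)) = (l'.eraseIdx n).length
    rw [hprodn]
    have := List.length_eraseIdx_add_one hn'
    omega
  have huniq : ∀ k₁ k₂ : Fin l'.length, IsReducedWordFor cs (l'.eraseIdx (k₁ : ℕ)) v →
      IsReducedWordFor cs (l'.eraseIdx (k₂ : ℕ)) v → k₁ = k₂ := by
    intro k₁ k₂ h₁ h₂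
    have e : ∀ k : Fin l'.length, IsReducedWordFor cs (l'.eraseIdx (k : ℕ)) v →
        (cs.rightInvSeq l').getD (k : ℕ) 1 = v'⁻¹ * v := by
      intro k hkk
      have h6 := cs.wordProd_mul_getD_rightInvSeq l' (k : ℕ)
      rw [hl'.2, hkk.2] at h6
      rw [← h6]
      group
    have h12 := (e k₁ h₁).trans (e k₂ h₂).symm
    have hnodup := (hl'.1).nodup_rightInvSeq
    rw [List.getD_eq_getElem _ _ (by simpa using k₁.isLt),
        List.getD_eq_getElem _ _ (by simpa using k₂.isLt)] at h12
    exact Fin.ext (hnodup.getElem_inj_iff.mp h12)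
  have hkex : IsReducedWordFor cs (l'.eraseIdx ((⟨n, hn'⟩ : Fin l'.length) : ℕ)) v :=
    ⟨hredn, hprodn⟩
  refine ⟨⟨⟨n, hn'⟩, hkex, fun y hy => huniq y ⟨n, hn'⟩ hy hkex⟩, ?_⟩
  intro k hk
  refine ⟨?_, hroots l' hl'.1 k⟩
  have hbil' : billey cs A v' l' = ∏ kk : Fin l'.length, toPoly (rootOf A l' kk) := by
    unfold billey
    rw [Finset.sum_eq_single_of_mem Finset.univ (Finset.mem_univ _)]
    · rw [if_pos (by rw [select_univ]; exact hl')]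
    · intro J _ hJ
      rw [if_neg]
      intro hJred
      apply hJ
      have h5 : cs.length (cs.wordProd (select l' J)) = (select l' J).length := hJred.1
      rw [hJred.2, length_select] at h5
      exact Finset.eq_univ_of_card J (by rw [Fintype.card_fin]; omega)
  have hbilv : billey cs A v l' = ∏ kk ∈ Finset.univ.erase k, toPoly (rootOf A l' kk) := by
    unfold billey
    rw [Finset.sum_eq_single_of_mem (Finset.univ.erase k) (Finset.mem_univ _)]
    · rw [if_pos (by rw [select_erase]; exact hk)]
    · intro J _ hJ
      rw [if_neg]
      intro hJred
      apply hJ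
      have h5 : cs.length (cs.wordProd (select l' J)) = (select l' J).length := hJred.1
      rw [hJred.2, length_select] at h5
      have hsd : (Finset.univ \ J).card = 1 := by
        rw [Finset.card_sdiff_of_subset (Finset.subset_univ J)]
        rw [Finset.card_univ, Fintype.card_fin]
        omega
      obtain ⟨j0, hj0⟩ := Finset.card_eq_one.mp hsd
      have hJ' : J = Finset.univ.erase j0 := by
        rw [Finset.erase_eq, ← hj0, Finset.sdiff_sdiff_self_left, Finset.univ_inter]
      have h7 : IsReducedWordFor cs (l'.eraseIdx (j0 : ℕ)) v := by
        rw [← select_erase l' j0, ← hJ']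
        exact hJred
      rw [hJ', huniq j0 k h7 hk]
  rw [hbil', hbilv]
  exact (Finset.mul_prod_erase Finset.univ _ (Finset.mem_univ k)).symm
end
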